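/- Monotonicity of magnitude under inclusion for Euclidean subsets: if Y ⊆ X are finite subsets of ℝⁿ, then Mag(Y) ≤ Mag(X). In particular, for any point x ∈ ℝⁿ, the quantity γ = Mag(X ∪ {x}) - Mag(X) is nonnegative. -/

import Mathlib

open Matrix Real

/-- The similarity matrix of a finite subset of a metric space, indexed by its points. -/
noncomputable def simMatrix {E : Type*} [MetricSpace E] (X : Finset E) :
    Matrix X X ℝ :=
  Matrix.of fun i j => Real.exp (-dist (i : E) (j : E))

/-- The magnitude `Mag X = 𝟙ᵀ ζ_X⁻¹ 𝟙` of a finite subset of a metric space. -/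
noncomputable def magnitude {E : Type*} [MetricSpace E] (X : Finset E) : ℝ :=
  letI := Classical.decEq E
  ∑ i, ((simMatrix X)⁻¹ *ᵥ fun _ => (1 : ℝ)) i

section Aux

set_option maxHeartbeats 1000000

open MeasureTheory Set

variable {ι : Type*} [Fintype ι] {m : ℕ}



lemma sum_inner_pow_nonneg (x : ι → EuclideanSpace ℝ (Fin m)) (c : ι → ℝ) (k : ℕ) :
    0 ≤ ∑ i, ∑ j, c i * c j * (inner ℝ (x i) (x j) : ℝ) ^ k := by
  have hinner : ∀ i j, (inner ℝ (x i) (x j) : ℝ) = ∑ a, x i a * x j a := by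
    intro i j
    simp [PiLp.inner_apply, RCLike.inner_apply, conj_trivial]
    exact Finset.sum_congr rfl fun _ _ => mul_comm _ _
  set A : ι → (Fin k → Fin m) → ℝ := fun i p => c i * ∏ t, x i (p t) with hA
  have key : ∀ i j, c i * c j * (inner ℝ (x i) (x j) : ℝ) ^ k
      = ∑ p : Fin k → Fin m, A i p * A j p := by
    intro i j
    rw [hinner, Fintype.sum_pow, Finset.mul_sum]
    refine Finset.sum_congr rfl fun p _ => ?_
    rw [Finset.prod_mul_distrib, hA]
    ring
  simp_rw [key]
  have h1 : ∀ i, ∑ j, ∑ p : Fin k → Fin m, A i p * A j p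
      = ∑ p : Fin k → Fin m, A i p * ∑ j, A j p := by
    intro i
    rw [Finset.sum_comm]
    exact Finset.sum_congr rfl fun p _ => (Finset.mul_sum _ _ _).symm
  simp_rw [h1]
  rw [Finset.sum_comm]
  refine Finset.sum_nonneg fun p _ => ?_
  rw [← Finset.sum_mul]
  exact mul_self_nonneg _

lemma sum_exp_inner_nonneg (x : ι → EuclideanSpace ℝ (Fin m)) (c : ι → ℝ) :
    0 ≤ ∑ i, ∑ j, c i * c j * Real.exp (inner ℝ (x i) (x j) : ℝ) := by
  have hexp : ∀ s : ℝ, Real.exp s = ∑' k : ℕ, s ^ k / k.factorial := fun s => by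
    rw [Real.exp_eq_exp_ℝ, NormedSpace.exp_eq_tsum_div]
  have hsum : ∀ (a s : ℝ), Summable (fun k : ℕ => a * (s ^ k / k.factorial)) := fun a s =>
    (Real.summable_pow_div_factorial s).mul_left a
  have swap : ∑ i, ∑ j, c i * c j * Real.exp (inner ℝ (x i) (x j) : ℝ)
      = ∑' k : ℕ, ∑ i, ∑ j, c i * c j * ((inner ℝ (x i) (x j) : ℝ) ^ k / k.factorial) := by
    rw [Summable.tsum_finsetSum (fun i _ => ?_)]
    · refine Finset.sum_congr rfl fun i _ => ?_
      rw [Summable.tsum_finsetSum (fun j _ => hsum _ _)]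
      refine Finset.sum_congr rfl fun j _ => ?_
      rw [tsum_mul_left, ← hexp]
    · exact summable_sum (fun j _ => hsum _ _)
  rw [swap]
  refine tsum_nonneg fun k => ?_
  have h2 : ∑ i, ∑ j, c i * c j * ((inner ℝ (x i) (x j) : ℝ) ^ k / k.factorial)
      = (∑ i, ∑ j, c i * c j * (inner ℝ (x i) (x j) : ℝ) ^ k) / k.factorial := by
    rw [Finset.sum_div]
    refine Finset.sum_congr rfl fun i _ => ?_
    rw [Finset.sum_div]
    exact Finset.sum_congr rfl fun j _ => by ring
  rw [h2]
  exact div_nonneg (sum_inner_pow_nonneg x c k) (by positivity)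

lemma sum_exp_gauss_nonneg (x : ι → EuclideanSpace ℝ (Fin m)) (c : ι → ℝ) {s : ℝ} (hs : 0 ≤ s) :
    0 ≤ ∑ i, ∑ j, c i * c j * Real.exp (-(s * ‖x i - x j‖ ^ 2)) := by
  have key : ∀ i j, c i * c j * Real.exp (-(s * ‖x i - x j‖ ^ 2))
      = (c i * Real.exp (-(s * ‖x i‖ ^ 2))) * (c j * Real.exp (-(s * ‖x j‖ ^ 2)))
        * Real.exp (inner ℝ (Real.sqrt (2*s) • x i) (Real.sqrt (2*s) • x j) : ℝ) := by
    intro i j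
    have h1 : (inner ℝ (Real.sqrt (2*s) • x i) (Real.sqrt (2*s) • x j) : ℝ)
        = 2*s*(inner ℝ (x i) (x j) : ℝ) := by
      rw [real_inner_smul_left, real_inner_smul_right, ← mul_assoc,
        Real.mul_self_sqrt (by linarith)]
    have hn := @norm_sub_sq_real (EuclideanSpace ℝ (Fin m)) _ _ (x i) (x j)
    have h2 : -(s * ‖x i - x j‖ ^ 2)
        = -(s * ‖x i‖ ^ 2) + -(s * ‖x j‖ ^ 2) + 2*s*(inner ℝ (x i) (x j) : ℝ) := by
      nlinarith [hn]
    rw [h1, h2, Real.exp_add, Real.exp_add]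
    ring
  simp_rw [key]
  exact sum_exp_inner_nonneg (fun i => Real.sqrt (2*s) • x i)
    (fun i => c i * Real.exp (-(s * ‖x i‖ ^ 2)))

/-- The exponential character of the additive group `EuclideanSpace ℝ (Fin m)`. -/
noncomputable def expChar {m : ℕ} (z : EuclideanSpace ℝ (Fin m)) :
    Multiplicative (EuclideanSpace ℝ (Fin m)) →* ℝ where
  toFun := fun y => Real.exp (inner ℝ z (Multiplicative.toAdd y) : ℝ)
  map_one' := by simp
  map_mul' := fun y₁ y₂ => by
    simp [toAdd_mul, inner_add_right, Real.exp_add]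

lemma expChar_injective {m : ℕ} : Function.Injective (expChar (m := m)) := by
  intro z z' hzz
  have h0 : ∀ y : EuclideanSpace ℝ (Fin m), (inner ℝ z y : ℝ) = inner ℝ z' y := by
    intro y
    have := DFunLike.congr_fun hzz (Multiplicative.ofAdd y)
    simpa [expChar, Real.exp_eq_exp] using this
  have h1 : (inner ℝ (z - z') (z - z') : ℝ) = 0 := by
    rw [inner_sub_left, h0 (z - z'), sub_self]
  rwa [inner_self_eq_zero, sub_eq_zero] at h1

lemma sum_exp_gauss_pos {x : ι → EuclideanSpace ℝ (Fin m)} (hx : Function.Injective x)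
    {c : ι → ℝ} (hc : c ≠ 0) {s : ℝ} (hs : 0 < s) :
    0 < ∑ i, ∑ j, c i * c j * Real.exp (-(s * ‖x i - x j‖ ^ 2)) := by
  rcases (sum_exp_gauss_nonneg x c hs.le).lt_or_eq with h | h
  · exact h
  exfalso
  -- From the vanishing of the quadratic form, derive that G y = 0 for all y.
  have hG : ∀ y : EuclideanSpace ℝ (Fin m),
      ∑ i, c i * Real.exp (-(s * ‖x i - y‖ ^ 2)) = 0 := by
    intro y
    set G := ∑ i, c i * Real.exp (-(s * ‖x i - y‖ ^ 2)) with hGdef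
    have hext := sum_exp_gauss_nonneg (Sum.elim x (fun _ : Unit => y))
      (Sum.elim c (fun _ : Unit => -G)) hs.le
    rw [Fintype.sum_sum_type] at hext
    simp only [Fintype.sum_sum_type, Sum.elim_inl, Sum.elim_inr, Finset.univ_unique,
      Finset.sum_const, Finset.card_singleton, one_smul] at hext
    simp only [show ∀ i, ‖y - x i‖ = ‖x i - y‖ from fun i => norm_sub_rev _ _] at hext
    have hB : ∑ i, c i * -G * Real.exp (-(s * ‖x i - y‖ ^ 2)) = -(G * G) := by
      have h' : ∑ i, c i * -G * Real.exp (-(s * ‖x i - y‖ ^ 2))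
          = -G * ∑ i, c i * Real.exp (-(s * ‖x i - y‖ ^ 2)) := by
        rw [Finset.mul_sum]
        exact Finset.sum_congr rfl fun i _ => by ring
      rw [h', ← hGdef]; ring
    have hD : ∑ i, -G * c i * Real.exp (-(s * ‖x i - y‖ ^ 2)) = -(G * G) := by
      have h' : ∑ i, -G * c i * Real.exp (-(s * ‖x i - y‖ ^ 2))
          = -G * ∑ i, c i * Real.exp (-(s * ‖x i - y‖ ^ 2)) := by
        rw [Finset.mul_sum]
        exact Finset.sum_congr rfl fun i _ => by ring
      rw [h', ← hGdef]; ring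
    rw [Finset.sum_add_distrib, hB, ← h, hD] at hext
    simp only [sub_self, norm_zero] at hext
    norm_num at hext
    have hGG : G * G ≤ 0 := by nlinarith [hext]
    exact mul_self_eq_zero.mp (le_antisymm hGG (mul_self_nonneg G))
  -- pointwise identity in character form
  have hpt : ∀ y : EuclideanSpace ℝ (Fin m),
      ∑ i, (c i * Real.exp (-(s * ‖x i‖ ^ 2))) * Real.exp (inner ℝ ((2*s) • x i) y : ℝ) = 0 := by
    intro y
    have h1 := hG y
    have h2 : ∀ i, c i * Real.exp (-(s * ‖x i - y‖ ^ 2)) * Real.exp (s * ‖y‖ ^ 2)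
        = (c i * Real.exp (-(s * ‖x i‖ ^ 2))) * Real.exp (inner ℝ ((2*s) • x i) y : ℝ) := by
      intro i
      have hn := @norm_sub_sq_real (EuclideanSpace ℝ (Fin m)) _ _ (x i) y
      have hsm : (inner ℝ ((2*s) • x i) y : ℝ) = 2*s*(inner ℝ (x i) y : ℝ) :=
        real_inner_smul_left _ _ _
      rw [hsm, mul_assoc, mul_assoc, ← Real.exp_add, ← Real.exp_add]
      congr 1
      rw [Real.exp_eq_exp]
      nlinarith [hn]
    calc ∑ i, (c i * Real.exp (-(s * ‖x i‖ ^ 2))) * Real.exp (inner ℝ ((2*s) • x i) y : ℝ)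
        = (∑ i, c i * Real.exp (-(s * ‖x i - y‖ ^ 2))) * Real.exp (s * ‖y‖ ^ 2) := by
          rw [Finset.sum_mul]; exact Finset.sum_congr rfl fun i _ => (h2 i).symm
      _ = 0 := by rw [h1, zero_mul]
  have h2s : (2*s) ≠ 0 := by positivity
  have hLI : LinearIndependent ℝ (fun i : ι =>
      ((expChar ((2*s) • x i)) : Multiplicative (EuclideanSpace ℝ (Fin m)) → ℝ)) := by
    refine (linearIndependent_monoidHom (Multiplicative (EuclideanSpace ℝ (Fin m))) ℝ).comp
      (fun i => expChar ((2*s) • x i)) ?_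
    intro i j hij
    exact hx (smul_right_injective (EuclideanSpace ℝ (Fin m)) h2s (expChar_injective hij))
  have hco : ∑ i, (c i * Real.exp (-(s * ‖x i‖ ^ 2))) •
      ((expChar ((2*s) • x i)) : Multiplicative (EuclideanSpace ℝ (Fin m)) → ℝ) = 0 := by
    funext yy
    simp only [Finset.sum_apply, Pi.smul_apply, smul_eq_mul, Pi.zero_apply, expChar,
      MonoidHom.coe_mk, OneHom.coe_mk]
    exact hpt (Multiplicative.toAdd yy)
  have hzero := Fintype.linearIndependent_iff.mp hLI _ hco
  obtain ⟨i, hci⟩ := Function.ne_iff.mp hc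
  rcases mul_eq_zero.mp (hzero i) with h' | h'
  exacts [hci h', absurd h' (Real.exp_ne_zero _)]



-- integrability of the Glasser integrand
lemma integrableOn_glasser (a : ℝ) (ha : 0 ≤ a) :
    IntegrableOn (fun v : ℝ => Real.exp (-(v^2 + a^2/v^2))) (Set.Ioi 0) := by
  have hgauss : IntegrableOn (fun v : ℝ => Real.exp (-v^2)) (Set.Ioi 0) := by
    have := (integrable_exp_neg_mul_sq one_pos).integrableOn (s := Set.Ioi (0:ℝ))
    simpa using this
  apply Integrable.mono' hgauss
  · refine (ContinuousOn.aestronglyMeasurable ?_ measurableSet_Ioi)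
    refine Real.continuous_exp.comp_continuousOn ?_
    refine ContinuousOn.neg ?_
    refine (continuousOn_pow 2).add ?_
    exact ContinuousOn.div continuousOn_const (continuousOn_pow 2)
      (fun v hv => pow_ne_zero 2 (ne_of_gt hv))
  · refine Filter.eventually_of_mem (self_mem_ae_restrict measurableSet_Ioi) ?_
    intro v hv
    rw [Real.norm_eq_abs, abs_of_pos (Real.exp_pos _), Real.exp_le_exp]
    have : 0 ≤ a^2/v^2 := by positivity
    nlinarith

lemma mul_exp_neg_le_one {u : ℝ} (hu : 0 ≤ u) : u * Real.exp (-u) ≤ 1 := by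
  have h1 : u ≤ Real.exp u := by
    have := Real.add_one_le_exp u
    linarith
  calc u * Real.exp (-u) ≤ Real.exp u * Real.exp (-u) :=
        mul_le_mul_of_nonneg_right h1 (Real.exp_pos _).le
    _ = 1 := by rw [← Real.exp_add]; simp

lemma integrableOn_glasser_weight {a : ℝ} (ha : 0 < a) :
    IntegrableOn (fun v : ℝ => (a/v^2) * Real.exp (-(v^2 + a^2/v^2))) (Set.Ioi 0) := by
  have hgauss : IntegrableOn (fun v : ℝ => a⁻¹ * Real.exp (-v^2)) (Set.Ioi 0) := by
    have := ((integrable_exp_neg_mul_sq one_pos).integrableOn (s := Set.Ioi (0:ℝ))).const_mul a⁻¹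
    simp at this; exact this
  apply Integrable.mono' hgauss
  · refine (ContinuousOn.aestronglyMeasurable ?_ measurableSet_Ioi)
    refine ContinuousOn.mul ?_ ?_
    · exact ContinuousOn.div continuousOn_const (continuousOn_pow 2)
        (fun v hv => pow_ne_zero 2 (ne_of_gt hv))
    refine Real.continuous_exp.comp_continuousOn ?_
    refine ContinuousOn.neg ?_
    refine (continuousOn_pow 2).add ?_
    exact ContinuousOn.div continuousOn_const (continuousOn_pow 2)
      (fun v hv => pow_ne_zero 2 (ne_of_gt hv))
  · refine Filter.eventually_of_mem (self_mem_ae_restrict measurableSet_Ioi) ?_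
    intro v hv
    have hv' : (0:ℝ) < v := hv
    have hv2 : (0:ℝ) < v^2 := by positivity
    have key : (a^2/v^2) * Real.exp (-(a^2/v^2)) ≤ 1 := mul_exp_neg_le_one (by positivity)
    have h1 : (a/v^2) * Real.exp (-(a^2/v^2)) ≤ a⁻¹ := by
      have : (a/v^2) * Real.exp (-(a^2/v^2)) = a⁻¹ * ((a^2/v^2) * Real.exp (-(a^2/v^2))) := by
        field_simp
      rw [this]
      calc a⁻¹ * ((a^2/v^2) * Real.exp (-(a^2/v^2))) ≤ a⁻¹ * 1 := by
            exact mul_le_mul_of_nonneg_left key (by positivity)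
        _ = a⁻¹ := mul_one _
    rw [Real.norm_eq_abs, abs_of_pos (mul_pos (div_pos ha hv2) (Real.exp_pos _))]
    have hsplit : Real.exp (-(v^2 + a^2/v^2)) = Real.exp (-(a^2/v^2)) * Real.exp (-v^2) := by
      rw [← Real.exp_add]; ring_nf
    rw [hsplit, ← mul_assoc]
    exact mul_le_mul_of_nonneg_right h1 (Real.exp_pos _).le

lemma glasser {a : ℝ} (ha : 0 < a) :
    ∫ v in Set.Ioi (0:ℝ), Real.exp (-(v^2 + a^2/v^2))
      = Real.sqrt π / 2 * Real.exp (-(2*a)) := by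
  set E : ℝ → ℝ := fun v => Real.exp (-(v^2 + a^2/v^2)) with hE
  -- substitution v ↦ a / v shows that the weighted integral equals the plain one
  have sub2 : ∫ v in Set.Ioi (0:ℝ), E v = ∫ v in Set.Ioi (0:ℝ), (a/v^2) * E v := by
    have himg : (fun v : ℝ => a / v) '' Set.Ioi 0 = Set.Ioi 0 := by
      ext u
      constructor
      · rintro ⟨v, hv, rfl⟩
        exact div_pos ha hv
      · intro hu
        exact ⟨a / u, div_pos ha hu, by field_simp⟩
    have hderiv : ∀ v ∈ Set.Ioi (0:ℝ),
        HasDerivWithinAt (fun v : ℝ => a / v) (-(a/v^2)) (Set.Ioi 0) v := by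
      intro v hv
      have hv' : (0:ℝ) < v := hv
      have h2 : -(a/v^2) = a * -(v^2)⁻¹ := by field_simp
      rw [h2, show (fun v : ℝ => a / v) = fun v : ℝ => a * v⁻¹ from
        funext fun w => div_eq_mul_inv a w]
      exact ((hasDerivAt_inv hv'.ne').const_mul a).hasDerivWithinAt
    have hinj : Set.InjOn (fun v : ℝ => a / v) (Set.Ioi 0) := by
      intro u hu v hv huv
      have hu' : (0:ℝ) < u := hu
      have hv' : (0:ℝ) < v := hv
      field_simp at huv
      exact huv.symm
    have := MeasureTheory.integral_image_eq_integral_abs_deriv_smul measurableSet_Ioi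
      hderiv hinj E
    rw [himg] at this
    rw [this]
    refine setIntegral_congr_fun measurableSet_Ioi (fun v hv => ?_)
    have hv' : (0:ℝ) < v := hv
    have habs : |(-(a/v^2))| = a/v^2 := by
      rw [abs_neg, abs_of_pos (by positivity)]
    rw [habs, smul_eq_mul]
    have : E (a / v) = E v := by
      rw [hE]
      simp only
      congr 1
      field_simp
      ring
    rw [this]
  -- substitution v ↦ v - a / v
  have sub1 : Real.sqrt π
      = Real.exp (2*a) * ((∫ v in Set.Ioi (0:ℝ), E v)
          + ∫ v in Set.Ioi (0:ℝ), (a/v^2) * E v) := by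
    have himg : (fun v : ℝ => v - a / v) '' Set.Ioi 0 = Set.univ := by
      refine Set.eq_univ_of_forall (fun u => ?_)
      have hr : 0 ≤ u^2 + 4*a := by positivity
      set r := Real.sqrt (u^2 + 4*a) with hrdef
      have hr2 : r^2 = u^2 + 4*a := Real.sq_sqrt hr
      have hrabs : |u| < r := by
        have h1 : Real.sqrt (u^2) < r := Real.sqrt_lt_sqrt (by positivity) (by linarith)
        rwa [Real.sqrt_sq_eq_abs] at h1
      have hv : (0:ℝ) < (u + r)/2 := by
        cases' abs_lt.mp hrabs with h1 h2
        linarith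
      refine ⟨(u + r)/2, hv, ?_⟩
      have hur : (0:ℝ) < u + r := by linarith
      simp only
      field_simp
      nlinarith [hr2, hur]
    have hderiv : ∀ v ∈ Set.Ioi (0:ℝ),
        HasDerivWithinAt (fun v : ℝ => v - a / v) (1 + a/v^2) (Set.Ioi 0) v := by
      intro v hv
      have hv' : (0:ℝ) < v := hv
      have h2 : 1 + a/v^2 = 1 - a * -(v^2)⁻¹ := by field_simp; ring
      rw [h2, show (fun v : ℝ => v - a / v) = fun v : ℝ => id v - a * v⁻¹ from
        funext fun w => by simp [div_eq_mul_inv]]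
      exact ((hasDerivAt_id v).sub ((hasDerivAt_inv hv'.ne').const_mul a)).hasDerivWithinAt
    have hinj : Set.InjOn (fun v : ℝ => v - a / v) (Set.Ioi 0) := by
      intro u hu v hv huv
      have hu' : (0:ℝ) < u := hu
      have hv' : (0:ℝ) < v := hv
      simp only at huv
      have key : (u - v) * (u*v + a) = 0 := by
        field_simp at huv
        nlinarith [huv]
      rcases mul_eq_zero.mp key with h' | h'
      · linarith
      · nlinarith
    have hCoV := MeasureTheory.integral_image_eq_integral_abs_deriv_smul measurableSet_Ioi
      hderiv hinj (fun u : ℝ => Real.exp (-u^2))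
    rw [himg] at hCoV
    have hLHS : ∫ u in Set.univ, Real.exp (-u^2) = Real.sqrt π := by
      rw [setIntegral_univ]
      have := integral_gaussian 1
      simpa using this
    rw [hLHS] at hCoV
    have hRHS : ∀ v ∈ Set.Ioi (0:ℝ),
        |1 + a/v^2| • Real.exp (-(v - a / v)^2)
          = Real.exp (2*a) * (E v + (a/v^2) * E v) := by
      intro v hv
      have hv' : (0:ℝ) < v := hv
      have habs : |1 + a/v^2| = 1 + a/v^2 := abs_of_pos (by positivity)
      rw [habs, smul_eq_mul]
      have harg : -(v - a/v)^2 = 2*a + -(v^2 + a^2/v^2) := by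
        field_simp
        ring
      rw [harg, Real.exp_add, hE]
      simp only
      ring
    calc Real.sqrt π = ∫ x in Set.Ioi (0:ℝ), |1 + a/x^2| • Real.exp (-(x - a/x)^2) := hCoV
      _ = ∫ v in Set.Ioi (0:ℝ), Real.exp (2*a) * (E v + (a/v^2) * E v) :=
            setIntegral_congr_fun measurableSet_Ioi hRHS
      _ = Real.exp (2*a) * ∫ v in Set.Ioi (0:ℝ), (E v + (a/v^2) * E v) := by
            rw [MeasureTheory.integral_const_mul]
      _ = Real.exp (2*a) * ((∫ v in Set.Ioi (0:ℝ), E v)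
            + ∫ v in Set.Ioi (0:ℝ), (a/v^2) * E v) := by
            rw [MeasureTheory.integral_add (integrableOn_glasser a ha.le)
              (integrableOn_glasser_weight ha)]
  rw [← sub2] at sub1
  have h2 : Real.exp (2*a) ≠ 0 := Real.exp_ne_zero _
  rw [Real.exp_neg]
  field_simp
  linarith [sub1]

lemma exp_neg_eq_integral {b : ℝ} (hb : 0 ≤ b) :
    Real.exp (-b)
      = (2 / Real.sqrt π) * ∫ v in Set.Ioi (0:ℝ), Real.exp (-(v^2 + b^2/(4*v^2))) := by
  have hπ : 0 < Real.sqrt π := Real.sqrt_pos.mpr Real.pi_pos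
  have hpt : ∀ v : ℝ, (b/2)^2/v^2 = b^2/(4*v^2) := by
    intro v
    rw [div_pow, div_div]
    norm_num
  rcases hb.lt_or_eq with hb' | hb'
  · have hg := glasser (a := b/2) (by linarith)
    simp only [hpt] at hg
    rw [hg]
    rw [show 2*(b/2) = b by ring]
    field_simp
  · rw [← hb']
    simp only [ne_eq, OfNat.ofNat_ne_zero, not_false_eq_true, zero_pow, zero_div, add_zero]
    have hI : ∫ v in Set.Ioi (0:ℝ), Real.exp (-(v^2)) = Real.sqrt π / 2 := by
      have := integral_gaussian_Ioi 1
      simpa using this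
    rw [hI]
    rw [neg_zero, Real.exp_zero]
    field_simp

lemma sum_exp_dist_pos {ι : Type*} [Fintype ι] {m : ℕ}
    {x : ι → EuclideanSpace ℝ (Fin m)} (hx : Function.Injective x)
    {c : ι → ℝ} (hc : c ≠ 0) :
    0 < ∑ i, ∑ j, c i * c j * Real.exp (-‖x i - x j‖) := by
  classical
  have hπ : 0 < Real.sqrt π := Real.sqrt_pos.mpr Real.pi_pos
  set g : ι × ι → ℝ → ℝ := fun p v =>
    c p.1 * c p.2 * Real.exp (-(v^2 + ‖x p.1 - x p.2‖^2/(4*v^2))) with hg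
  have hint : ∀ p : ι × ι, IntegrableOn (g p) (Set.Ioi 0) := by
    intro p
    have hpt : ∀ v : ℝ, (‖x p.1 - x p.2‖/2)^2/v^2 = ‖x p.1 - x p.2‖^2/(4*v^2) := by
      intro v
      rw [div_pow, div_div]
      norm_num
    have h := (integrableOn_glasser (‖x p.1 - x p.2‖/2) (by positivity)).const_mul
      (c p.1 * c p.2)
    simp [hg, hpt] at h ⊢; exact h
  set F : ℝ → ℝ := fun v => ∑ p : ι × ι, g p v with hF
  have hQ : ∑ i, ∑ j, c i * c j * Real.exp (-‖x i - x j‖)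
      = (2 / Real.sqrt π) * ∫ v in Set.Ioi (0:ℝ), F v := by
    have h1 : ∀ i j, c i * c j * Real.exp (-‖x i - x j‖)
        = (2 / Real.sqrt π) * ∫ v in Set.Ioi (0:ℝ), g (i, j) v := by
      intro i j
      rw [hg]
      simp only
      rw [exp_neg_eq_integral (norm_nonneg (x i - x j)), MeasureTheory.integral_const_mul]
      ring
    simp_rw [h1, ← Finset.mul_sum]
    congr 1
    rw [← Fintype.sum_prod_type (f := fun p : ι × ι => ∫ v in Set.Ioi (0:ℝ), g p v),
      ← MeasureTheory.integral_finset_sum Finset.univ (fun p _ => hint p)]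
  rw [hQ]
  have hFpos : ∀ v ∈ Set.Ioi (0:ℝ), 0 < F v := by
    intro v hv
    have hv' : (0:ℝ) < v := hv
    have hs : (0:ℝ) < 1/(4*v^2) := by positivity
    have hQs := sum_exp_gauss_pos hx hc hs
    have hsplit : ∀ p : ι × ι, g p v
        = Real.exp (-v^2) * (c p.1 * c p.2 * Real.exp (-(1/(4*v^2) * ‖x p.1 - x p.2‖^2))) := by
      intro p
      rw [hg]
      simp only
      rw [show -(v^2 + ‖x p.1 - x p.2‖^2/(4*v^2))
        = -v^2 + -(1/(4*v^2) * ‖x p.1 - x p.2‖^2) by ring, Real.exp_add]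
      ring
    rw [hF]
    simp only
    rw [Finset.sum_congr rfl (fun p _ => hsplit p), ← Finset.mul_sum]
    refine mul_pos (Real.exp_pos _) ?_
    rw [Fintype.sum_prod_type]
    exact hQs
  have hFint : IntegrableOn F (Set.Ioi 0) :=
    MeasureTheory.integrable_finset_sum _ (fun p _ => hint p)
  have hpos : 0 < ∫ v in Set.Ioi (0:ℝ), F v := by
    rw [setIntegral_pos_iff_support_of_nonneg_ae ?_ hFint]
    · refine lt_of_lt_of_le (b := MeasureTheory.volume (Set.Ioi (0:ℝ))) ?_
        (measure_mono (fun v hv => ⟨(hFpos v hv).ne', hv⟩))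
      rw [Real.volume_Ioi]
      exact ENNReal.zero_lt_top
    · refine Filter.eventually_of_mem (self_mem_ae_restrict measurableSet_Ioi) ?_
      intro v hv
      exact (hFpos v hv).le
  positivity


lemma simMatrix_posDef {n : ℕ} (X : Finset (EuclideanSpace ℝ (Fin n))) :
    (simMatrix X).PosDef := by
  refine Matrix.PosDef.of_dotProduct_mulVec_pos ?_ ?_
  · ext i j
    simp [simMatrix, Matrix.conjTranspose_apply, dist_comm]
  · intro c hc
    have hQ : star c ⬝ᵥ ((simMatrix X) *ᵥ c)
        = ∑ i, ∑ j, c i * c j * Real.exp (-‖(i : EuclideanSpace ℝ (Fin n)) - (j : EuclideanSpace ℝ (Fin n))‖) := by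
      simp only [dotProduct, Matrix.mulVec, Pi.star_apply, star_trivial,
        simMatrix, Matrix.of_apply, dist_eq_norm, Finset.mul_sum]
      exact Finset.sum_congr rfl fun i _ => Finset.sum_congr rfl fun j _ => by ring
    rw [hQ]
    exact sum_exp_dist_pos (x := fun i : X => (i : EuclideanSpace ℝ (Fin n)))
      Subtype.val_injective hc

lemma dot_mulVec_eq {κ : Type*} [Fintype κ] (M : Matrix κ κ ℝ) (u w : κ → ℝ) :
    u ⬝ᵥ (M *ᵥ w) = ∑ p, ∑ q, u p * (M p q * w q) := by
  simp [dotProduct, Matrix.mulVec, Finset.mul_sum]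

lemma sum_extend {E : Type*} [DecidableEq E] {X Y : Finset E} (h : Y ⊆ X) (f : Y → ℝ) :
    ∑ j : X, (if hj : (j : E) ∈ Y then f ⟨j, hj⟩ else 0) = ∑ i : Y, f i := by
  set G : E → ℝ := fun z => if hz : z ∈ Y then f ⟨z, hz⟩ else 0 with hG
  have h1 : ∑ j : X, (if hj : (j : E) ∈ Y then f ⟨j, hj⟩ else 0) = ∑ z ∈ X, G z := by
    rw [← Finset.sum_coe_sort X G]
  have h2 : ∑ z ∈ X, G z = ∑ z ∈ Y, G z := by
    refine (Finset.sum_subset h (fun z _ hzY => dif_neg hzY)).symm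
  have h3 : ∑ z ∈ Y, G z = ∑ i : Y, f i := by
    rw [← Finset.sum_coe_sort Y G]
    exact Finset.sum_congr rfl fun i _ => by rw [hG]; simp
  rw [h1, h2, h3]

lemma quad_le_magnitude {n : ℕ} (X : Finset (EuclideanSpace ℝ (Fin n))) (u : X → ℝ) :
    2 * (∑ i, u i) - u ⬝ᵥ ((simMatrix X) *ᵥ u) ≤ magnitude X := by
  letI := Classical.decEq (EuclideanSpace ℝ (Fin n))
  set M := simMatrix X with hM
  have hpd := simMatrix_posDef X
  have hdet : IsUnit M.det := isUnit_iff_ne_zero.mpr hpd.det_pos.ne'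
  set z : X → ℝ := M⁻¹ *ᵥ (fun _ => (1 : ℝ)) with hz
  have hMz : M *ᵥ z = (fun _ => (1 : ℝ)) := by
    rw [hz, Matrix.mulVec_mulVec, Matrix.mul_nonsing_inv _ hdet, Matrix.one_mulVec]
  have hmag : magnitude X = ∑ i, z i := rfl
  have hsymm : ∀ i j, M i j = M j i := fun i j => by
    simp [hM, simMatrix, dist_comm]
  have hsym : ∀ v w : X → ℝ, v ⬝ᵥ (M *ᵥ w) = w ⬝ᵥ (M *ᵥ v) := by
    intro v w
    rw [dot_mulVec_eq, dot_mulVec_eq, Finset.sum_comm]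
    exact Finset.sum_congr rfl fun q _ => Finset.sum_congr rfl fun p _ => by
      rw [hsymm p q]; ring
  have h0 := hpd.posSemidef.dotProduct_mulVec_nonneg (u - z)
  rw [star_trivial, Matrix.mulVec_sub, dotProduct_sub, sub_dotProduct,
    sub_dotProduct] at h0
  have e1 : u ⬝ᵥ (M *ᵥ z) = ∑ i, u i := by
    rw [hMz]; simp [dotProduct]
  have e2 : z ⬝ᵥ (M *ᵥ u) = ∑ i, u i := by rw [hsym]; exact e1
  have e3 : z ⬝ᵥ (M *ᵥ z) = ∑ i, z i := by
    rw [hMz]; simp [dotProduct]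
  rw [e1, e2, e3] at h0
  rw [hmag]
  linarith

lemma magnitude_mono {n : ℕ} {X Y : Finset (EuclideanSpace ℝ (Fin n))} (h : Y ⊆ X) :
    magnitude Y ≤ magnitude X := by
  letI := Classical.decEq (EuclideanSpace ℝ (Fin n))
  set K : EuclideanSpace ℝ (Fin n) → EuclideanSpace ℝ (Fin n) → ℝ :=
    fun z z' => Real.exp (-dist z z') with hK
  set N := simMatrix Y with hN
  have hpdY := simMatrix_posDef Y
  have hdetY : IsUnit N.det := isUnit_iff_ne_zero.mpr hpdY.det_pos.ne'
  set v : Y → ℝ := N⁻¹ *ᵥ (fun _ => (1 : ℝ)) with hv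
  have hNv : N *ᵥ v = (fun _ => (1 : ℝ)) := by
    rw [hv, Matrix.mulVec_mulVec, Matrix.mul_nonsing_inv _ hdetY, Matrix.one_mulVec]
  have hmagY : magnitude Y = ∑ i, v i := rfl
  set w : X → ℝ := fun j => if hj : (j : EuclideanSpace ℝ (Fin n)) ∈ Y then v ⟨j, hj⟩ else 0
    with hw
  have hsum : ∑ j, w j = ∑ i, v i := sum_extend h v
  -- the quadratic form of the big matrix on the extended vector
  have hquad : w ⬝ᵥ ((simMatrix X) *ᵥ w) = v ⬝ᵥ (N *ᵥ v) := by
    rw [dot_mulVec_eq, dot_mulVec_eq]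
    have hinner : ∀ p : X, ∑ q : X, (simMatrix X) p q * w q
        = ∑ i : Y, K p i * v i := by
      intro p
      have : ∀ q : X, (simMatrix X) p q * w q
          = (if hq : (q : EuclideanSpace ℝ (Fin n)) ∈ Y then K p q * v ⟨q, hq⟩ else 0) := by
        intro q
        rw [hw]
        simp only [mul_dite, mul_zero]
        rfl
      rw [Finset.sum_congr rfl fun q _ => this q]
      exact sum_extend h (fun i : Y => K p i * v i)
    have houter : ∀ p : X, w p * (∑ q : X, (simMatrix X) p q * w q)
        = (if hp : (p : EuclideanSpace ℝ (Fin n)) ∈ Y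
            then v ⟨p, hp⟩ * ∑ i : Y, K p i * v i else 0) := by
      intro p
      rw [show ∑ q : X, (simMatrix X) p q * w q = ∑ i : Y, K p i * v i from hinner p, hw]
      simp only [dite_mul, zero_mul]
    calc ∑ p : X, ∑ q : X, w p * ((simMatrix X) p q * w q)
        = ∑ p : X, w p * (∑ q : X, (simMatrix X) p q * w q) := by
          refine Finset.sum_congr rfl fun p _ => ?_
          rw [Finset.mul_sum]
      _ = ∑ i : Y, v i * ∑ j : Y, K i j * v j := by
          rw [Finset.sum_congr rfl fun p _ => houter p]
          exact sum_extend h (fun i : Y => v i * ∑ j : Y, K i j * v j)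
      _ = ∑ p : Y, ∑ q : Y, v p * (N p q * v q) := by
          refine Finset.sum_congr rfl fun i _ => ?_
          rw [Finset.mul_sum]
          exact Finset.sum_congr rfl fun j _ => by rfl
  have hvNv : v ⬝ᵥ (N *ᵥ v) = ∑ i, v i := by
    rw [hNv]; simp [dotProduct]
  have hle := quad_le_magnitude X w
  rw [hsum, hquad, hvNv, ← hmagY] at hle
  linarith [hle]


end Aux

/-- Monotonicity of magnitude under inclusion for Euclidean subsets: if
`Y ⊆ X` are finite subsets of ℝⁿ then `Mag Y ≤ Mag X`; in particular, for any point `x`,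
`Mag (X ∪ {x}) - Mag X ≥ 0`. -/
theorem magnitude_monotone (n : ℕ) (X Y Z : Finset (EuclideanSpace ℝ (Fin n)))
    (hYX : Y ⊆ X) (x : EuclideanSpace ℝ (Fin n))
    (hZ : (Z : Set (EuclideanSpace ℝ (Fin n))) = insert x (X : Set (EuclideanSpace ℝ (Fin n)))) :
    magnitude Y ≤ magnitude X ∧ 0 ≤ magnitude Z - magnitude X := by
  have hXZ : X ⊆ Z := by
    rw [← Finset.coe_subset, hZ]
    exact Set.subset_insert x _
  exact ⟨magnitude_mono hYX, sub_nonneg.mpr (magnitude_mono hXZ)⟩
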